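/- Let Γ be a finite directed acyclic graph with inner nodes ordered by reachability. For any pair of levels L ⊆ M of the node poset, the layer Γ[L,M] is a normal subgraph of Γ. -/
import Mathlib


/- We model a (polarized, progressive) graph by a type `V` of inner nodes, a type
`E` of edges, and source/target maps `src tgt : E → V`. -/

/-- One step along an oriented edge. -/
def GraphStep {V E : Type*} (src tgt : E → V) (x y : V) : Prop :=
  ∃ e : E, src e = x ∧ tgt e = y

/-- There is a directed path from `x` to `y`. -/
def Reach {V E : Type*} (src tgt : E → V) : V → V → Prop :=
  Relation.ReflTransGen (GraphStep src tgt)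

/-- The graph is acyclic: the reachability preorder is antisymmetric. -/
def Acyclic {V E : Type*} (src tgt : E → V) : Prop :=
  ∀ x y : V, Reach src tgt x y → Reach src tgt y x → x = y

/-- A level of the graph: an initial segment (downward-closed subset) of the set of
inner nodes under the reachability order. -/
def IsLevel {V E : Type*} (src tgt : E → V) (L : Set V) : Prop :=
  ∀ ⦃x y : V⦄, Reach src tgt x y → y ∈ L → x ∈ L

/-- An edge is loose in a subgraph with node set `N` if neither endpoint is in `N`. -/
def LooseIn {V E : Type*} (src tgt : E → V) (N : Set V) (e : E) : Prop :=
  src e ∉ N ∧ tgt e ∉ N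

/-- A subgraph (node set `N`, edge set `Es`) is normal: (1) no directed path contains
two distinct edges of the subgraph one of which is loose; (2) every node of the
subgraph keeps all of its incident edges; (3) every directed path between two nodes
of the subgraph stays within it. -/
def NormalSubgraph {V E : Type*} (src tgt : E → V) (N : Set V) (Es : Set E) : Prop :=
  (∀ e ∈ Es, ∀ e' ∈ Es, e ≠ e' → LooseIn src tgt N e →
      ¬ Reach src tgt (tgt e) (src e') ∧ ¬ Reach src tgt (tgt e') (src e)) ∧
  (∀ x ∈ N, ∀ e : E, src e = x ∨ tgt e = x → e ∈ Es) ∧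
  (∀ x ∈ N, ∀ y ∈ N,
      (∀ e : E, Reach src tgt x (src e) → Reach src tgt (tgt e) y → e ∈ Es) ∧
      (∀ z : V, Reach src tgt x z → Reach src tgt z y → z ∈ N))

/-- An edge is cut by a level `L` if its source lies in `L` and its target outside. -/
def CutBy {V E : Type*} (src tgt : E → V) (L : Set V) (e : E) : Prop :=
  src e ∈ L ∧ tgt e ∉ L

/-- The inner nodes of the layer `Γ[L,M]`. -/
def layerNodes {V : Type*} (L M : Set V) : Set V := M \ L

/-- The edges of the layer `Γ[L,M]`: pinned edges with both endpoints in `M \ L`,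
together with the edges cut by `L` or by `M`. -/
def layerEdges {V E : Type*} (src tgt : E → V) (L M : Set V) : Set E :=
  {e | (src e ∈ M \ L ∧ tgt e ∈ M \ L) ∨ CutBy src tgt L e ∨ CutBy src tgt M e}

/-- For any pair of levels `L ⊆ M` of a finite DAG, the layer
`Γ[L,M]` is a normal subgraph of `Γ`. -/
theorem layer_is_normal {V E : Type*} [Finite V] [Finite E]
    (src tgt : E → V) (hacyc : Acyclic src tgt)
    (L M : Set V) (hL : IsLevel src tgt L) (hM : IsLevel src tgt M) (hLM : L ⊆ M) :
    NormalSubgraph src tgt (layerNodes L M) (layerEdges src tgt L M) := by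
  have hstep : ∀ e : E, Reach src tgt (src e) (tgt e) := fun e =>
    Relation.ReflTransGen.single ⟨e, rfl, rfl⟩
  -- any edge of the layer has source in M
  have hsrcM : ∀ e ∈ layerEdges src tgt L M, src e ∈ M := by
    rintro e (⟨⟨h, _⟩, _⟩ | ⟨h, _⟩ | ⟨h, _⟩)
    · exact h
    · exact hLM h
    · exact h
  -- a loose edge of the layer has source in L and target outside M
  have hloose : ∀ e ∈ layerEdges src tgt L M, LooseIn src tgt (layerNodes L M) e →
      src e ∈ L ∧ tgt e ∉ M := by
    rintro e (⟨hs, ht⟩ | ⟨hs, ht⟩ | ⟨hs, ht⟩) ⟨hs', ht'⟩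
    · exact absurd hs hs'
    · refine ⟨hs, fun htM => ht' ⟨htM, ht⟩⟩
    · refine ⟨?_, ht⟩
      by_contra hsL
      exact hs' ⟨hs, hsL⟩
  refine ⟨?_, ?_, ?_⟩
  · -- (1)
    intro e he e' he' _ hl
    obtain ⟨hsL, htM⟩ := hloose e he hl
    constructor
    · intro hr
      exact htM (hM hr (hsrcM e' he'))
    · intro hr
      have htL : tgt e' ∈ L := hL hr hsL
      rcases he' with (⟨_, _, h⟩ | ⟨_, h⟩ | ⟨_, h⟩)
      · exact h htL
      · exact h htL
      · exact h (hLM htL)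
  · -- (2)
    rintro x ⟨hxM, hxL⟩ e (rfl | rfl)
    · have htL : tgt e ∉ L := fun h => hxL (hL (hstep e) h)
      by_cases htM : tgt e ∈ M
      · exact Or.inl ⟨⟨hxM, hxL⟩, htM, htL⟩
      · exact Or.inr (Or.inr ⟨hxM, htM⟩)
    · by_cases hsL : src e ∈ L
      · exact Or.inr (Or.inl ⟨hsL, hxL⟩)
      · have hsM : src e ∈ M := hM (hstep e) hxM
        exact Or.inl ⟨⟨hsM, hsL⟩, hxM, hxL⟩
  · -- (3)
    rintro x ⟨hxM, hxL⟩ y ⟨hyM, hyL⟩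
    constructor
    · intro e hxs hty
      have hsM : src e ∈ M := hM ((hstep e).trans hty) hyM
      have hsL : src e ∉ L := fun h => hxL (hL hxs h)
      have htM : tgt e ∈ M := hM hty hyM
      have htL : tgt e ∉ L := fun h => hsL (hL (hstep e) h)
      exact Or.inl ⟨⟨hsM, hsL⟩, htM, htL⟩
    · intro z hxz hzy
      exact ⟨hM hzy hyM, fun h => hxL (hL hxz h)⟩
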